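/- For every G-free LTL formula φ and every infinite word w, w satisfies FGφ if and only if for almost every i ∈ ℕ (all but finitely many i) there exists j ≥ i such that af(φ, w[i..j]) is propositionally equivalent to tt. -/
import Mathlib


namespace LTLF

/-- LTL formulas in negation normal form over atomic propositions `Ap`. -/
inductive LTL (Ap : Type) : Type
  | tt : LTL Ap
  | ff : LTL Ap
  | atom : Ap → LTL Ap
  | natom : Ap → LTL Ap
  | and : LTL Ap → LTL Ap → LTL Ap
  | or : LTL Ap → LTL Ap → LTL Ap
  | next : LTL Ap → LTL Ap
  | fut : LTL Ap → LTL Ap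
  | glob : LTL Ap → LTL Ap
  | untl : LTL Ap → LTL Ap → LTL Ap

variable {Ap : Type}

/-- Infinite words over the alphabet `2^Ap`. -/
abbrev Word (Ap : Type) := ℕ → Set Ap

/-- The suffix `w_k`. -/
def suffix (w : Word Ap) (k : ℕ) : Word Ap := fun i => w (i + k)

/-- Standard LTL semantics on infinite words. -/
def Sat : LTL Ap → Word Ap → Prop
  | .tt, _ => True
  | .ff, _ => False
  | .atom a, w => a ∈ w 0
  | .natom a, w => a ∉ w 0
  | .and φ ψ, w => Sat φ w ∧ Sat ψ w
  | .or φ ψ, w => Sat φ w ∨ Sat ψ w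
  | .next φ, w => Sat φ (suffix w 1)
  | .fut φ, w => ∃ k, Sat φ (suffix w k)
  | .glob φ, w => ∀ k, Sat φ (suffix w k)
  | .untl φ ψ, w => ∃ k, Sat ψ (suffix w k) ∧ ∀ j < k, Sat φ (suffix w j)

open Classical in
/-- The "after function" `af(φ, ν)`. -/
noncomputable def af : LTL Ap → Set Ap → LTL Ap
  | .tt, _ => .tt
  | .ff, _ => .ff
  | .atom a, ν => if a ∈ ν then .tt else .ff
  | .natom a, ν => if a ∈ ν then .ff else .tt
  | .and φ ψ, ν => .and (af φ ν) (af ψ ν)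
  | .or φ ψ, ν => .or (af φ ν) (af ψ ν)
  | .next φ, _ => φ
  | .fut φ, ν => .or (af φ ν) (.fut φ)
  | .glob φ, ν => .and (af φ ν) (.glob φ)
  | .untl φ ψ, ν => .or (af ψ ν) (.and (af φ ν) (.untl φ ψ))

/-- `af` extended to finite words. -/
noncomputable def afw (φ : LTL Ap) (u : List (Set Ap)) : LTL Ap := u.foldl af φ

open Classical in
/-- The variant `afG`, identical to `af` except `afG(Gφ, ν) = Gφ`. -/
noncomputable def afG : LTL Ap → Set Ap → LTL Ap
  | .tt, _ => .tt
  | .ff, _ => .ff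
  | .atom a, ν => if a ∈ ν then .tt else .ff
  | .natom a, ν => if a ∈ ν then .ff else .tt
  | .and φ ψ, ν => .and (afG φ ν) (afG ψ ν)
  | .or φ ψ, ν => .or (afG φ ν) (afG ψ ν)
  | .next φ, _ => φ
  | .fut φ, ν => .or (afG φ ν) (.fut φ)
  | .glob φ, _ => .glob φ
  | .untl φ ψ, ν => .or (afG ψ ν) (.and (afG φ ν) (.untl φ ψ))

/-- `afG` extended to finite words. -/
noncomputable def afGw (φ : LTL Ap) (u : List (Set Ap)) : LTL Ap := u.foldl afG φ

/-- The finite infix `w[i..j] = w[i] w[i+1] ⋯ w[j]`. -/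
def infixW (w : Word Ap) (i j : ℕ) : List (Set Ap) :=
  (List.range (j + 1 - i)).map (fun k => w (i + k))

/-- The finite prefix `w[0..i]`. -/
def prefixW (w : Word Ap) (i : ℕ) : List (Set Ap) := infixW w 0 i

/-- Concatenation of a finite word with an infinite word. -/
def cat (u : List (Set Ap)) (w : Word Ap) : Word Ap :=
  fun k => if h : k < u.length then u.get ⟨k, h⟩ else w (k - u.length)

/-- Propositional evaluation of a formula under a valuation `v`, treating
literals and temporal formulas (`X`, `F`, `G`, `U`) as opaque propositional atoms. -/
def propSat (v : LTL Ap → Prop) : LTL Ap → Prop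
  | .tt => True
  | .ff => False
  | .and φ ψ => propSat v φ ∧ propSat v ψ
  | .or φ ψ => propSat v φ ∨ propSat v ψ
  | φ => v φ

/-- A valuation is consistent on literals: `a` and `¬a` get complementary values. -/
def LitConsistent (v : LTL Ap → Prop) : Prop :=
  ∀ a : Ap, v (.atom a) ↔ ¬ v (.natom a)

/-- Propositional implication `φ ⊨_p ψ`. -/
def PropImp (φ ψ : LTL Ap) : Prop :=
  ∀ v : LTL Ap → Prop, LitConsistent v → propSat v φ → propSat v ψ

/-- Propositional equivalence `φ ≡_p ψ`. -/
def PropEquiv (φ ψ : LTL Ap) : Prop :=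
  ∀ v : LTL Ap → Prop, LitConsistent v → (propSat v φ ↔ propSat v ψ)

/-- `⋀_{χ ∈ H} χ ⊨_p ψ` : the (possibly infinite) conjunction of the
hypotheses `H` propositionally implies `ψ`. -/
def PropImpSet (H : Set (LTL Ap)) (ψ : LTL Ap) : Prop :=
  ∀ v : LTL Ap → Prop, LitConsistent v → (∀ χ ∈ H, propSat v χ) → propSat v ψ

/-- The list of subformulas of a formula. -/
def subfs : LTL Ap → List (LTL Ap)
  | .tt => [.tt]
  | .ff => [.ff]
  | .atom a => [.atom a]
  | .natom a => [.natom a]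
  | .and φ ψ => .and φ ψ :: (subfs φ ++ subfs ψ)
  | .or φ ψ => .or φ ψ :: (subfs φ ++ subfs ψ)
  | .next φ => .next φ :: subfs φ
  | .fut φ => .fut φ :: subfs φ
  | .glob φ => .glob φ :: subfs φ
  | .untl φ ψ => .untl φ ψ :: (subfs φ ++ subfs ψ)

/-- `Gψ` is a `G`-subformula of `φ`. -/
def GSub (φ ψ : LTL Ap) : Prop := LTL.glob ψ ∈ subfs φ

/-- A formula is `G`-free if it contains no occurrence of `G`. -/
def GFree : LTL Ap → Prop
  | .glob _ => False
  | .and φ ψ => GFree φ ∧ GFree ψ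
  | .or φ ψ => GFree φ ∧ GFree ψ
  | .next φ => GFree φ
  | .fut φ => GFree φ
  | .untl φ ψ => GFree φ ∧ GFree ψ
  | _ => True

/-- `ind(w, ψ)`: the least index `j` with `w_j ⊨ Gψ`. -/
noncomputable def ind (w : Word Ap) (ψ : LTL Ap) : ℕ :=
  sInf {j | Sat (.glob ψ) (suffix w j)}

/-! ### Auxiliary lemmas -/

/-- Prepend a letter to an infinite word. -/
def consW (ν : Set Ap) (w : Word Ap) : Word Ap
  | 0 => ν
  | k+1 => w k

/-- Prepend a finite word to an infinite word. -/
def catW : List (Set Ap) → Word Ap → Word Ap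
  | [], w => w
  | ν :: u, w => consW ν (catW u w)

/-- The prefix of length `n`. -/
def pfx (w : Word Ap) (n : ℕ) : List (Set Ap) := (List.range n).map w

lemma suffix_zero (w : Word Ap) : suffix w 0 = w := rfl

lemma suffix_suffix (w : Word Ap) (m n : ℕ) :
    suffix (suffix w m) n = suffix w (n + m) := by
  funext i; simp [suffix, Nat.add_assoc]

lemma suffix_consW (ν : Set Ap) (w : Word Ap) (k : ℕ) :
    suffix (consW ν w) (k+1) = suffix w k := rfl

lemma exists_suffix_consW (P : Word Ap → Prop) (ν : Set Ap) (w : Word Ap) :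
    (∃ k, P (suffix (consW ν w) k)) ↔ P (consW ν w) ∨ ∃ k, P (suffix w k) := by
  constructor
  · rintro ⟨k, hk⟩
    cases k with
    | zero => exact Or.inl (by rwa [suffix_zero] at hk)
    | succ k => exact Or.inr ⟨k, by rwa [suffix_consW] at hk⟩
  · rintro (h | ⟨k, hk⟩)
    · exact ⟨0, by rwa [suffix_zero]⟩
    · exact ⟨k+1, by rwa [suffix_consW]⟩

lemma untl_consW (φ ψ : LTL Ap) (ν : Set Ap) (w : Word Ap) :
    Sat (.untl φ ψ) (consW ν w) ↔
      Sat ψ (consW ν w) ∨ (Sat φ (consW ν w) ∧ Sat (.untl φ ψ) w) := by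
  show (∃ k, Sat ψ (suffix (consW ν w) k) ∧ ∀ j < k, Sat φ (suffix (consW ν w) j)) ↔ _
  constructor
  · rintro ⟨k, hψ, hφ⟩
    cases k with
    | zero => exact Or.inl (by rwa [suffix_zero] at hψ)
    | succ k =>
      refine Or.inr ⟨by have := hφ 0 (Nat.succ_pos k); rwa [suffix_zero] at this,
        k, by rwa [suffix_consW] at hψ, fun j hj => ?_⟩
      have := hφ (j+1) (Nat.succ_lt_succ hj)
      rwa [suffix_consW] at this
  · rintro (h | ⟨h0, k, hψ, hφ⟩)
    · exact ⟨0, by rwa [suffix_zero], fun j hj => absurd hj (Nat.not_lt_zero j)⟩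
    · refine ⟨k+1, by rwa [suffix_consW], fun j hj => ?_⟩
      cases j with
      | zero => rwa [suffix_zero]
      | succ j => rw [suffix_consW]; exact hφ j (Nat.lt_of_succ_lt_succ hj)

lemma af_sat : ∀ (φ : LTL Ap) (ν : Set Ap) (w : Word Ap),
    Sat (af φ ν) w ↔ Sat φ (consW ν w) := by
  intro φ
  induction φ with
  | tt => intro ν w; exact Iff.rfl
  | ff => intro ν w; exact Iff.rfl
  | atom a => intro ν w; by_cases h : a ∈ ν <;> simp [af, Sat, h, consW]
  | natom a => intro ν w; by_cases h : a ∈ ν <;> simp [af, Sat, h, consW]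
  | and φ ψ ih1 ih2 => intro ν w; simp only [af, Sat, ih1, ih2]
  | or φ ψ ih1 ih2 => intro ν w; simp only [af, Sat, ih1, ih2]
  | next φ _ =>
    intro ν w
    show Sat φ w ↔ Sat φ (suffix (consW ν w) 1)
    rw [suffix_consW, suffix_zero]
  | fut φ ih =>
    intro ν w
    show Sat (af φ ν) w ∨ (∃ k, Sat φ (suffix w k)) ↔ ∃ k, Sat φ (suffix (consW ν w) k)
    rw [exists_suffix_consW (fun w' => Sat φ w'), ih]
  | glob φ ih =>
    intro ν w
    show Sat (af φ ν) w ∧ (∀ k, Sat φ (suffix w k)) ↔ ∀ k, Sat φ (suffix (consW ν w) k)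
    constructor
    · rintro ⟨h0, h⟩ k
      cases k with
      | zero => rw [suffix_zero]; exact (ih ν w).mp h0
      | succ k => rw [suffix_consW]; exact h k
    · intro h
      exact ⟨(ih ν w).mpr (by have := h 0; rwa [suffix_zero] at this),
        fun k => by have := h (k+1); rwa [suffix_consW] at this⟩
  | untl φ ψ ih1 ih2 =>
    intro ν w
    show Sat (af ψ ν) w ∨ (Sat (af φ ν) w ∧ Sat (.untl φ ψ) w) ↔ Sat (.untl φ ψ) (consW ν w)
    rw [ih1, ih2, untl_consW]

lemma afw_nil (φ : LTL Ap) : afw φ [] = φ := rfl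

lemma afw_cons (φ : LTL Ap) (ν : Set Ap) (u : List (Set Ap)) :
    afw φ (ν :: u) = afw (af φ ν) u := rfl

lemma afw_sat : ∀ (u : List (Set Ap)) (φ : LTL Ap) (w : Word Ap),
    Sat (afw φ u) w ↔ Sat φ (catW u w)
  | [], φ, w => Iff.rfl
  | ν :: u, φ, w => by
    rw [afw_cons, afw_sat u (af φ ν) w]
    exact af_sat φ ν (catW u w)

lemma pfx_succ (w : Word Ap) (n : ℕ) : pfx w (n+1) = w 0 :: pfx (suffix w 1) n := by
  simp [pfx, List.range_succ_eq_map, List.map_map, Function.comp, suffix]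

lemma pfx_succ_snoc (w : Word Ap) (n : ℕ) : pfx w (n+1) = pfx w n ++ [w n] := by
  simp [pfx, List.range_succ]

lemma pfx_add (w : Word Ap) (a b : ℕ) :
    pfx w (a + b) = pfx w a ++ pfx (suffix w a) b := by
  simp [pfx, List.range_add, List.map_map, Function.comp, suffix, Nat.add_comm]

lemma catW_pfx : ∀ (n : ℕ) (w : Word Ap), catW (pfx w n) (suffix w n) = w := by
  intro n
  induction n with
  | zero => intro w; rw [suffix_zero]; rfl
  | succ n ih =>
    intro w
    rw [pfx_succ]
    show consW (w 0) (catW (pfx (suffix w 1) n) (suffix w (n+1))) = w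
    have h1 : suffix w (n+1) = suffix (suffix w 1) n := by
      rw [suffix_suffix]
    rw [h1, ih (suffix w 1)]
    funext k; cases k <;> rfl

lemma propSat_sat (w : Word Ap) : ∀ χ : LTL Ap,
    propSat (fun σ => Sat σ w) χ ↔ Sat χ w := by
  intro χ
  induction χ with
  | and φ ψ ih1 ih2 => exact and_congr ih1 ih2
  | or φ ψ ih1 ih2 => exact or_congr ih1 ih2
  | _ => exact Iff.rfl

lemma litcons_sat (w : Word Ap) : LitConsistent (fun σ => Sat σ w) := by
  intro a
  show a ∈ w 0 ↔ ¬ (a ∉ w 0)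
  exact (not_not.symm)

lemma propSat_af (v : LTL Ap → Prop) (ν : Set Ap) : ∀ χ : LTL Ap,
    propSat v (af χ ν) ↔ propSat (fun σ => propSat v (af σ ν)) χ := by
  intro χ
  induction χ with
  | and φ ψ ih1 ih2 => exact and_congr ih1 ih2
  | or φ ψ ih1 ih2 => exact or_congr ih1 ih2
  | _ => exact Iff.rfl

lemma litcons_af (v : LTL Ap → Prop) (ν : Set Ap) :
    LitConsistent (fun σ => propSat v (af σ ν)) := by
  intro a
  by_cases h : a ∈ ν <;> simp [af, h, propSat]

lemma propEquiv_af {σ τ : LTL Ap} (ν : Set Ap) (h : PropEquiv σ τ) :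
    PropEquiv (af σ ν) (af τ ν) := by
  intro v hv
  rw [propSat_af, propSat_af]
  exact h _ (litcons_af v ν)

lemma equiv_tt_iff {σ : LTL Ap} :
    PropEquiv σ .tt ↔ ∀ v, LitConsistent v → propSat v σ := by
  constructor
  · intro h v hv; exact (h v hv).mpr trivial
  · intro h v hv; exact ⟨fun _ => trivial, fun _ => h v hv⟩

lemma equiv_tt_af {σ : LTL Ap} (ν : Set Ap) (h : PropEquiv σ .tt) :
    PropEquiv (af σ ν) .tt :=
  propEquiv_af ν h

lemma afw_snoc (χ : LTL Ap) (u : List (Set Ap)) (ν : Set Ap) :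
    afw χ (u ++ [ν]) = af (afw χ u) ν := by
  simp [afw]

lemma equiv_tt_mono {χ : LTL Ap} (w : Word Ap) {n m : ℕ} (hnm : n ≤ m)
    (h : PropEquiv (afw χ (pfx w n)) .tt) : PropEquiv (afw χ (pfx w m)) .tt := by
  induction m, hnm using Nat.le_induction with
  | base => exact h
  | succ m _ ih => rw [pfx_succ_snoc, afw_snoc]; exact equiv_tt_af _ ih

lemma afw_and : ∀ (u : List (Set Ap)) (φ ψ : LTL Ap),
    afw (.and φ ψ) u = .and (afw φ u) (afw ψ u)
  | [], _, _ => rfl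
  | ν :: u, φ, ψ => afw_and u (af φ ν) (af ψ ν)

lemma afw_or : ∀ (u : List (Set Ap)) (φ ψ : LTL Ap),
    afw (.or φ ψ) u = .or (afw φ u) (afw ψ u)
  | [], _, _ => rfl
  | ν :: u, φ, ψ => afw_or u (af φ ν) (af ψ ν)

lemma afw_fut_cons (φ : LTL Ap) (ν : Set Ap) (u : List (Set Ap)) :
    afw (.fut φ) (ν :: u) = .or (afw φ (ν :: u)) (afw (.fut φ) u) :=
  afw_or u (af φ ν) (.fut φ)

lemma afw_untl_cons (φ ψ : LTL Ap) (ν : Set Ap) (u : List (Set Ap)) :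
    afw (.untl φ ψ) (ν :: u) =
      .or (afw ψ (ν :: u)) (.and (afw φ (ν :: u)) (afw (.untl φ ψ) u)) := by
  show afw (.or (af ψ ν) (.and (af φ ν) (.untl φ ψ))) u = _
  rw [afw_or, afw_and]
  rfl

lemma or_left_tt {σ τ : LTL Ap} (h : PropEquiv σ .tt) : PropEquiv (.or σ τ) .tt :=
  equiv_tt_iff.mpr fun v hv => Or.inl (equiv_tt_iff.mp h v hv)

lemma or_right_tt {σ τ : LTL Ap} (h : PropEquiv τ .tt) : PropEquiv (.or σ τ) .tt :=
  equiv_tt_iff.mpr fun v hv => Or.inr (equiv_tt_iff.mp h v hv)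

lemma and_tt {σ τ : LTL Ap} (h1 : PropEquiv σ .tt) (h2 : PropEquiv τ .tt) :
    PropEquiv (.and σ τ) .tt :=
  equiv_tt_iff.mpr fun v hv => ⟨equiv_tt_iff.mp h1 v hv, equiv_tt_iff.mp h2 v hv⟩

lemma fut_prepend (φ : LTL Ap) : ∀ (u u' : List (Set Ap)),
    PropEquiv (afw (.fut φ) u') .tt → PropEquiv (afw (.fut φ) (u ++ u')) .tt
  | [], _, h => h
  | ν :: u, u', h => by
    rw [List.cons_append, afw_fut_cons]
    exact or_right_tt (fut_prepend φ u u' h)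

/-- Core lemma: a satisfied `G`-free formula eventually becomes
propositionally true under `af`. -/
lemma core : ∀ φ : LTL Ap, GFree φ → ∀ w : Word Ap, Sat φ w →
    ∃ n, PropEquiv (afw φ (pfx w n)) .tt := by
  intro φ
  induction φ with
  | tt => intro _ w _; exact ⟨0, fun v hv => Iff.rfl⟩
  | ff => intro _ w h; exact absurd h id
  | atom a =>
    intro _ w h
    refine ⟨1, ?_⟩
    have : afw (.atom a) (pfx w 1) = .tt := by
      show af (.atom a) (w 0) = .tt
      simp [af, show a ∈ w 0 from h]
    rw [this]
    exact fun v hv => Iff.rfl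
  | natom a =>
    intro _ w h
    refine ⟨1, ?_⟩
    have : afw (.natom a) (pfx w 1) = .tt := by
      show af (.natom a) (w 0) = .tt
      simp [af, show a ∉ w 0 from h]
    rw [this]
    exact fun v hv => Iff.rfl
  | and φ ψ ih1 ih2 =>
    intro hG w h
    obtain ⟨n1, e1⟩ := ih1 hG.1 w h.1
    obtain ⟨n2, e2⟩ := ih2 hG.2 w h.2
    refine ⟨max n1 n2, ?_⟩
    rw [afw_and]
    exact and_tt (equiv_tt_mono w (le_max_left n1 n2) e1)
      (equiv_tt_mono w (le_max_right n1 n2) e2)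
  | or φ ψ ih1 ih2 =>
    intro hG w h
    cases h with
    | inl h1 =>
      obtain ⟨n, e⟩ := ih1 hG.1 w h1
      exact ⟨n, by rw [afw_or]; exact or_left_tt e⟩
    | inr h2 =>
      obtain ⟨n, e⟩ := ih2 hG.2 w h2
      exact ⟨n, by rw [afw_or]; exact or_right_tt e⟩
  | next φ ih =>
    intro hG w h
    obtain ⟨n, e⟩ := ih hG (suffix w 1) h
    exact ⟨n+1, by rw [pfx_succ]; exact e⟩
  | fut φ ih =>
    intro hG w h
    obtain ⟨k, hk⟩ := h
    obtain ⟨n, e⟩ := ih hG (suffix w k) hk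
    have e' : PropEquiv (afw φ (pfx (suffix w k) (n+1))) .tt :=
      equiv_tt_mono _ (Nat.le_succ n) e
    refine ⟨k + (n+1), ?_⟩
    rw [pfx_add]
    apply fut_prepend
    rw [pfx_succ, afw_fut_cons]
    exact or_left_tt (by rwa [← pfx_succ])
  | glob φ _ => intro hG; exact absurd hG id
  | untl φ ψ ih1 ih2 =>
    intro hG w h
    have key : ∀ k, ∀ w : Word Ap, Sat ψ (suffix w k) → (∀ j < k, Sat φ (suffix w j)) →
        ∃ n, PropEquiv (afw (.untl φ ψ) (pfx w n)) .tt := by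
      intro k
      induction k with
      | zero =>
        intro w hψ _
        rw [suffix_zero] at hψ
        obtain ⟨n, e⟩ := ih2 hG.2 w hψ
        have e' := equiv_tt_mono w (Nat.le_succ n) e
        refine ⟨n+1, ?_⟩
        rw [pfx_succ, afw_untl_cons, ← pfx_succ]
        exact or_left_tt e'
      | succ k ihk =>
        intro w hψ hφall
        have hψ' : Sat ψ (suffix (suffix w 1) k) := by
          rw [suffix_suffix]; exact hψ
        have hφ' : ∀ j < k, Sat φ (suffix (suffix w 1) j) := fun j hj => by
          rw [suffix_suffix]; exact hφall (j+1) (Nat.succ_lt_succ hj)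
        obtain ⟨n1, e1⟩ := ihk (suffix w 1) hψ' hφ'
        obtain ⟨n2, e2⟩ := ih1 hG.1 w
          (by have := hφall 0 (Nat.succ_pos k); rwa [suffix_zero] at this)
        refine ⟨(max n1 n2) + 1, ?_⟩
        rw [pfx_succ, afw_untl_cons, ← pfx_succ]
        refine or_right_tt (and_tt ?_ ?_)
        · exact equiv_tt_mono w (Nat.le_succ_of_le (le_max_right n1 n2)) e2
        · exact equiv_tt_mono (suffix w 1) (le_max_left n1 n2) e1
    obtain ⟨k, hψ, hφall⟩ := h
    exact key k w hψ hφall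

lemma infix_eq_pfx (w : Word Ap) (i n : ℕ) :
    infixW w i (i + n) = pfx (suffix w i) (n + 1) := by
  simp only [infixW, pfx, suffix]
  rw [show i + n + 1 - i = n + 1 from by omega]
  exact List.map_congr_left fun k _ => by show w (i + k) = w (k + i); rw [Nat.add_comm]

lemma catW_infix (w : Word Ap) (i j : ℕ) (hij : i ≤ j) :
    catW (infixW w i j) (suffix w (j+1)) = suffix w i := by
  obtain ⟨n, rfl⟩ := Nat.exists_eq_add_of_le hij
  rw [infix_eq_pfx, show i + n + 1 = (n+1) + i from by omega, ← suffix_suffix w i (n+1),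
    catW_pfx]

/-- for `G`-free `φ`, `w ⊨ FGφ` iff for almost every `i` there is
`j ≥ i` with `af(φ, w[i..j]) ≡_p tt`. -/
theorem gfree_FG_iff_tokens_succeed {Ap : Type} (φ : LTL Ap) (hφ : GFree φ) (w : Word Ap) :
    Sat (LTL.fut (LTL.glob φ)) w ↔
      ∃ N : ℕ, ∀ i ≥ N, ∃ j ≥ i, PropEquiv (afw φ (infixW w i j)) LTL.tt := by
  constructor
  · rintro ⟨k, hg⟩
    refine ⟨k, fun i hi => ?_⟩
    have hs : Sat φ (suffix w i) := by
      have := hg (i - k)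
      rwa [suffix_suffix, Nat.sub_add_cancel hi] at this
    obtain ⟨n, e⟩ := core φ hφ (suffix w i) hs
    have e' := equiv_tt_mono (suffix w i) (Nat.le_succ n) e
    refine ⟨i + n, Nat.le_add_right i n, ?_⟩
    rwa [infix_eq_pfx]
  · rintro ⟨N, hN⟩
    refine ⟨N, ?_⟩
    intro m
    rw [suffix_suffix]
    obtain ⟨j, hj, heq⟩ := hN (m + N) (Nat.le_add_left N m)
    have hprop : propSat (fun σ => Sat σ (suffix w (j+1))) (afw φ (infixW w (m+N) j)) :=
      (heq _ (litcons_sat _)).mpr trivial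
    have hsat : Sat (afw φ (infixW w (m+N) j)) (suffix w (j+1)) :=
      (propSat_sat _ _).mp hprop
    rw [afw_sat, catW_infix w (m+N) j hj] at hsat
    exact hsat

end LTLF
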